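/- Dubois-Reymond lemma: Let α < β be reals and p, q ∈ C^0([α,β], ℝ^{n*}). If for every h ∈ C^1([α,β], ℝ^n) with h(α) = h(β) = 0 one has ∫_α^β (p(t)·h(t) + q(t)·h'(t)) dt = 0, then q is of class C^1 on [α,β] and q' = p. -/

import Mathlib

open MeasureTheory Set intervalIntegral Filter

private def dre (n : ℕ) (i : Fin n) : Fin n → ℝ := fun j => if i = j then 1 else 0

private lemma dr_apply_eq_sum {n : ℕ} (f : (Fin n → ℝ) →L[ℝ] ℝ) (x : Fin n → ℝ) :
    f x = ∑ i, x i * f (dre n i) := by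
  have := f.toLinearMap.pi_apply_eq_sum_univ x
  unfold dre
  simpa only [smul_eq_mul, ContinuousLinearMap.coe_coe] using this

private lemma dr_icc_eq {E : Type*} [NormedAddCommGroup E] [NormedSpace ℝ E]
    {a b : ℝ} (hab : a ≤ b) (f : ℝ → E) :
    (∫ t in Set.Icc a b, f t) = ∫ t in a..b, f t := by
  rw [intervalIntegral.integral_of_le hab, MeasureTheory.integral_Icc_eq_integral_Ioc]

private lemma dr_ftc1 {E : Type*} [NormedAddCommGroup E] [NormedSpace ℝ E] [CompleteSpace E]
    {f : ℝ → E} {a b : ℝ} (hab : a ≤ b) (hf : ContinuousOn f (Set.Icc a b))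
    {t : ℝ} (ht : t ∈ Set.Icc a b) :
    HasDerivWithinAt (fun u => ∫ s in a..u, f s) (f t) (Set.Icc a b) t := by
  haveI : Fact (t ∈ Set.Icc a b) := ⟨ht⟩
  refine intervalIntegral.integral_hasDerivWithinAt_right ?_ ?_ (hf t ht)
  · refine (hf.mono ?_).intervalIntegrable
    rw [Set.uIcc_of_le ht.1]
    exact Set.Icc_subset_Icc le_rfl ht.2
  · exact hf.stronglyMeasurableAtFilter_nhdsWithin measurableSet_Icc t

private lemma dr_ftc2 {E : Type*} [NormedAddCommGroup E] [NormedSpace ℝ E] [CompleteSpace E]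
    {f f' : ℝ → E} {a b : ℝ} (hab : a ≤ b)
    (hd : ∀ t ∈ Set.Icc a b, HasDerivWithinAt f (f' t) (Set.Icc a b) t)
    (hc : ContinuousOn f' (Set.Icc a b)) :
    ∫ t in a..b, f' t = f b - f a := by
  refine intervalIntegral.integral_eq_sub_of_hasDeriv_right_of_le hab
    (fun t ht => (hd t ht).continuousWithinAt) (fun t ht => ?_) ?_
  · exact ((hd t (Set.Ioo_subset_Icc_self ht)).hasDerivAt
      (Icc_mem_nhds ht.1 ht.2)).hasDerivWithinAt
  · exact ContinuousOn.intervalIntegrable (by rwa [Set.uIcc_of_le hab])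

private lemma dr_zero {f : ℝ → ℝ} {a b : ℝ} (hab : a < b)
    (hf : ContinuousOn f (Set.Icc a b)) (h0 : ∀ t, 0 ≤ f t)
    (hI : (∫ t in Set.Icc a b, f t) = 0) : ∀ t ∈ Set.Icc a b, f t = 0 := by
  have hint : IntegrableOn f (Set.Icc a b) := hf.integrableOn_Icc
  have hae : f =ᵐ[volume.restrict (Set.Icc a b)] 0 :=
    (MeasureTheory.integral_eq_zero_iff_of_nonneg_ae (Eventually.of_forall h0) hint).1 hI
  exact fun t ht =>
    MeasureTheory.Measure.eqOn_Icc_of_ae_eq volume hab.ne hae hf continuousOn_const ht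

/-- Dubois-Reymond lemma: if `∫ (p·h + q·h') = 0` for all `C¹` functions `h` on `[α,β]`
vanishing at the endpoints, then `q` is `C¹` with `q' = p`. -/
theorem stmt_5 {n : ℕ} (α β : ℝ) (hαβ : α < β)
    (p q : ℝ → (Fin n → ℝ) →L[ℝ] ℝ)
    (hp : ContinuousOn p (Set.Icc α β)) (hq : ContinuousOn q (Set.Icc α β))
    (H : ∀ h h' : ℝ → (Fin n → ℝ),
      (∀ t ∈ Set.Icc α β, HasDerivWithinAt h (h' t) (Set.Icc α β) t) →
      ContinuousOn h' (Set.Icc α β) → h α = 0 → h β = 0 →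
      ∫ t in Set.Icc α β, (p t (h t) + q t (h' t)) = 0) :
    (∀ t ∈ Set.Icc α β, HasDerivWithinAt q (p t) (Set.Icc α β) t) ∧
      ContinuousOn (fun t => p t) (Set.Icc α β) := by
  classical
  have hab : α ≤ β := hαβ.le
  have hne : β - α ≠ 0 := sub_ne_zero.2 hαβ.ne'
  refine ⟨?_, hp⟩
  set P : ℝ → (Fin n → ℝ) →L[ℝ] ℝ := fun u => ∫ s in α..u, p s with hPdef
  have hPd : ∀ t ∈ Set.Icc α β, HasDerivWithinAt P (p t) (Set.Icc α β) t :=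
    fun t ht => dr_ftc1 hab hp ht
  have hPc : ContinuousOn P (Set.Icc α β) := fun t ht => (hPd t ht).continuousWithinAt
  set g : ℝ → (Fin n → ℝ) →L[ℝ] ℝ := fun t => q t - P t with hgdef
  have hgc : ContinuousOn g (Set.Icc α β) := hq.sub hPc
  -- the key consequence of the hypothesis: `∫ g·h' = 0` for all admissible `h`
  have key : ∀ h h' : ℝ → Fin n → ℝ,
      (∀ t ∈ Set.Icc α β, HasDerivWithinAt h (h' t) (Set.Icc α β) t) →
      ContinuousOn h' (Set.Icc α β) → h α = 0 → h β = 0 →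
      (∫ t in α..β, g t (h' t)) = 0 := by
    intro h h' hd hc' h0 h1
    have hc : ContinuousOn h (Set.Icc α β) := fun t ht => (hd t ht).continuousWithinAt
    have int1 : IntervalIntegrable (fun t => p t (h t) + q t (h' t)) volume α β := by
      apply ContinuousOn.intervalIntegrable
      rw [Set.uIcc_of_le hab]
      exact (hp.clm_apply hc).add (hq.clm_apply hc')
    have int2 : IntervalIntegrable (fun t => p t (h t) + P t (h' t)) volume α β := by
      apply ContinuousOn.intervalIntegrable
      rw [Set.uIcc_of_le hab]
      exact (hp.clm_apply hc).add (hPc.clm_apply hc')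
    have e1 : (∫ t in α..β, (p t (h t) + q t (h' t))) = 0 := by
      rw [← dr_icc_eq hab]; exact H h h' hd hc' h0 h1
    have e2 : (∫ t in α..β, (p t (h t) + P t (h' t))) = 0 := by
      have hprod : ∀ t ∈ Set.Icc α β,
          HasDerivWithinAt (fun u => P u (h u)) (p t (h t) + P t (h' t)) (Set.Icc α β) t :=
        fun t ht => (hPd t ht).clm_apply (hd t ht)
      have := dr_ftc2 hab hprod ((hp.clm_apply hc).add (hPc.clm_apply hc'))
      rw [this, h0, h1]
      simp
    calc (∫ t in α..β, g t (h' t))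
        = ∫ t in α..β, ((p t (h t) + q t (h' t)) - (p t (h t) + P t (h' t))) := by
          apply intervalIntegral.integral_congr
          intro t _
          simp only [hgdef, ContinuousLinearMap.sub_apply]
          ring
      _ = 0 := by
          rw [intervalIntegral.integral_sub int1 int2, e1, e2, sub_zero]
  -- the classical variation
  set m : Fin n → ℝ := fun i => (∫ t in α..β, g t (dre n i)) / (β - α) with hmdef
  have hgi_cont : ∀ i, ContinuousOn (fun t => g t (dre n i)) (Set.Icc α β) :=
    fun i => hgc.clm_apply continuousOn_const
  set F : Fin n → ℝ → ℝ := fun i t => g t (dre n i) - m i with hFdef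
  have hF_cont : ∀ i, ContinuousOn (F i) (Set.Icc α β) :=
    fun i => (hgi_cont i).sub continuousOn_const
  have hgi_int : ∀ i, IntervalIntegrable (fun t => g t (dre n i)) volume α β := by
    intro i
    apply ContinuousOn.intervalIntegrable
    rw [Set.uIcc_of_le hab]; exact hgi_cont i
  have hF0 : ∀ i, (∫ t in α..β, F i t) = 0 := by
    intro i
    simp only [hFdef]
    rw [intervalIntegral.integral_sub (hgi_int i) intervalIntegrable_const,
      intervalIntegral.integral_const, hmdef, smul_eq_mul]
    field_simp
    ring
  set h : ℝ → Fin n → ℝ := fun t i => (∫ s in α..t, g s (dre n i)) - (t - α) * m i with hhdef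
  set h' : ℝ → Fin n → ℝ := fun t i => F i t with hh'def
  have hd : ∀ t ∈ Set.Icc α β, HasDerivWithinAt h (h' t) (Set.Icc α β) t := by
    intro t ht
    rw [hasDerivWithinAt_pi]
    intro i
    simp only [hhdef, hh'def, hFdef]
    have d1 : HasDerivWithinAt (fun u => ∫ s in α..u, g s (dre n i)) (g t (dre n i))
        (Set.Icc α β) t := dr_ftc1 hab (hgi_cont i) ht
    have d2 : HasDerivWithinAt (fun u : ℝ => (u - α) * m i) (m i) (Set.Icc α β) t := by
      simpa using (((hasDerivAt_id t).sub_const α).mul_const (m i)).hasDerivWithinAt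
    exact d1.sub d2
  have hc' : ContinuousOn h' (Set.Icc α β) := by
    rw [continuousOn_pi]
    intro i
    simp only [hh'def]
    exact hF_cont i
  have h0 : h α = 0 := by
    funext i
    simp [hhdef]
  have h1 : h β = 0 := by
    funext i
    simp only [hhdef, hmdef, Pi.zero_apply]
    field_simp
    ring
  have hkey := key h h' hd hc' h0 h1
  -- expand in coordinates
  have expand : ∀ t, g t (h' t) = ∑ i, F i t * g t (dre n i) := by
    intro t
    rw [dr_apply_eq_sum (g t) (h' t)]
  have hprod_int : ∀ i, IntervalIntegrable (fun t => F i t * g t (dre n i)) volume α β := by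
    intro i
    apply ContinuousOn.intervalIntegrable
    rw [Set.uIcc_of_le hab]
    exact (hF_cont i).mul (hgi_cont i)
  have hsq_int : ∀ i, IntervalIntegrable (fun t => (F i t) ^ 2) volume α β := by
    intro i
    apply ContinuousOn.intervalIntegrable
    rw [Set.uIcc_of_le hab]
    exact (hF_cont i).pow 2
  have each : ∀ i, (∫ t in α..β, F i t * g t (dre n i)) = ∫ t in α..β, (F i t) ^ 2 := by
    intro i
    have step : (∫ t in α..β, F i t * g t (dre n i))
        = ∫ t in α..β, ((F i t) ^ 2 + m i * F i t) := by
      apply intervalIntegral.integral_congr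
      intro t _
      simp only [hFdef]
      ring
    have hmF_int : IntervalIntegrable (fun t => m i * F i t) volume α β := by
      apply ContinuousOn.intervalIntegrable
      rw [Set.uIcc_of_le hab]
      exact continuousOn_const.mul (hF_cont i)
    rw [step, intervalIntegral.integral_add (hsq_int i) hmF_int,
      intervalIntegral.integral_const_mul, hF0 i, mul_zero, add_zero]
  have hsum0 : ∑ i, (∫ t in α..β, (F i t) ^ 2) = 0 := by
    calc ∑ i, (∫ t in α..β, (F i t) ^ 2)
        = ∑ i, ∫ t in α..β, F i t * g t (dre n i) :=
          Finset.sum_congr rfl fun i _ => (each i).symm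
      _ = ∫ t in α..β, ∑ i, F i t * g t (dre n i) :=
          (intervalIntegral.integral_finset_sum fun i _ => hprod_int i).symm
      _ = ∫ t in α..β, g t (h' t) :=
          intervalIntegral.integral_congr fun t _ => (expand t).symm
      _ = 0 := hkey
  have sq_zero : ∀ i, (∫ t in α..β, (F i t) ^ 2) = 0 := by
    have hnn : ∀ j ∈ Finset.univ, (0:ℝ) ≤ ∫ t in α..β, (F j t) ^ 2 := fun j _ =>
      intervalIntegral.integral_nonneg hab fun t _ => sq_nonneg _
    intro i
    exact (Finset.sum_eq_zero_iff_of_nonneg hnn).1 hsum0 i (Finset.mem_univ i)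
  have hFzero : ∀ i, ∀ t ∈ Set.Icc α β, F i t = 0 := by
    intro i t ht
    have hI : (∫ t in Set.Icc α β, (F i t) ^ 2) = 0 := by
      rw [dr_icc_eq hab]; exact sq_zero i
    have := dr_zero hαβ ((hF_cont i).pow 2) (fun t => sq_nonneg _) hI t ht
    exact pow_eq_zero_iff two_ne_zero |>.1 this
  have hαmem : α ∈ Set.Icc α β := Set.left_mem_Icc.2 hab
  -- g is constant on `[α,β]`
  have hgconst : ∀ t ∈ Set.Icc α β, g t = g α := by
    intro t ht
    have key_i : ∀ i, g t (dre n i) = g α (dre n i) := by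
      intro i
      have h1 := hFzero i t ht
      have h2 := hFzero i α hαmem
      simp only [hFdef] at h1 h2
      linarith
    apply ContinuousLinearMap.ext
    intro x
    rw [dr_apply_eq_sum (g t) x, dr_apply_eq_sum (g α) x]
    exact Finset.sum_congr rfl fun i _ => by rw [key_i i]
  -- conclude
  intro t ht
  have hcongr : ∀ s ∈ Set.Icc α β, q s = P s + (q α - P α) := by
    intro s hs
    have := hgconst s hs
    simp only [hgdef] at this
    rw [← this]
    abel
  have hder : HasDerivWithinAt (fun u => P u + (q α - P α)) (p t) (Set.Icc α β) t :=
    (hPd t ht).add_const _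
  exact hder.congr (fun s hs => hcongr s hs) (hcongr t ht)
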